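/- Let η = diag(1,−1,−1,−1) be the 4×4 Minkowski matrix over ℝ, and let p(1,3) be the Poincaré algebra, realized as the Lie subalgebra of gl(5,ℝ) of block matrices M(A,b) = [[A,b],[0,0]] with A a 4×4 real matrix satisfying Aᵀη + ηA = 0 and b ∈ ℝ⁴. Let g₁ = ℝ⁴ be the vector representation of p(1,3), with action M(A,b)·v = A v (so translations act trivially). Write τ(b) = M(0,b) and ⟨u,v⟩_η = uᵀηv. Then the map μ(u,v,w) = ⟨u,v⟩_η τ(w) + ⟨v,w⟩_η τ(u) + ⟨w,u⟩_η τ(v) is a totally symmetric trilinear map g₁³ → p(1,3) satisfying the equivariance identity J3 and the identity J4; hence p(1,3) ⊕ ℝ⁴ with this 3-bracket is an elementary Lie algebra of order 3 (the Poincaré algebra of order 3 of Example 2.5, with brackets {V_m,V_n,V_r} = η_{mn}P_r + η_{mr}P_n + η_{rn}P_m). -/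

import Mathlib

/-- The Minkowski metric `η = diag(1,−1,−1,−1)` over `ℝ`. -/
def etaR : Matrix (Fin 4) (Fin 4) ℝ := Matrix.diagonal ![1, -1, -1, -1]

/-- The block matrix `M(A,b) = [[A,b],[0,0]] ∈ gl(5,ℝ)`; the Poincaré algebra `p(1,3)`
is the Lie subalgebra of such matrices with `Aᵀη + ηA = 0`. -/
def MblkR (A : Matrix (Fin 4) (Fin 4) ℝ) (b : Fin 4 → ℝ) :
    Matrix (Fin 4 ⊕ Fin 1) (Fin 4 ⊕ Fin 1) ℝ :=
  Matrix.fromBlocks A (Matrix.of fun i _ => b i) 0 0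

/-- `⟨u,v⟩_η = uᵀ η v`. -/
def innR (u v : Fin 4 → ℝ) : ℝ := dotProduct u (etaR.mulVec v)

/-- The 3-bracket `μ(u,v,w) = ⟨u,v⟩_η τ(w) + ⟨v,w⟩_η τ(u) + ⟨w,u⟩_η τ(v)`,
where `τ(b) = M(0,b)`. -/
def muP (u v w : Fin 4 → ℝ) : Matrix (Fin 4 ⊕ Fin 1) (Fin 4 ⊕ Fin 1) ℝ :=
  innR u v • MblkR 0 w + innR v w • MblkR 0 u + innR w u • MblkR 0 v

/-- The Lorentz (top-left) block of a matrix in `gl(5,ℝ)`, through which an element of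
`p(1,3)` acts on the vector representation `g₁ = ℝ⁴`. -/
def lorentzBlockR (m : Matrix (Fin 4 ⊕ Fin 1) (Fin 4 ⊕ Fin 1) ℝ) :
    Matrix (Fin 4) (Fin 4) ℝ :=
  Matrix.of fun i j => m (Sum.inl i) (Sum.inl j)


lemma innR_symm (u v : Fin 4 → ℝ) : innR u v = innR v u := by
  simp [innR, etaR, dotProduct, Matrix.mulVec_diagonal, Fin.sum_univ_four]
  ring

lemma innR_left (a : ℝ) (u u' v : Fin 4 → ℝ) :
    innR (a • u + u') v = a * innR u v + innR u' v := by
  simp [innR, add_dotProduct, smul_dotProduct, smul_eq_mul]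

lemma innR_right (a : ℝ) (u u' v : Fin 4 → ℝ) :
    innR v (a • u + u') = a * innR v u + innR v u' := by
  rw [innR_symm, innR_left, innR_symm u v, innR_symm u' v]

lemma tau_lin (a : ℝ) (u u' : Fin 4 → ℝ) :
    MblkR 0 (a • u + u') = a • MblkR 0 u + MblkR 0 u' := by
  ext i j
  rcases i with i | i <;> rcases j with j | j <;>
    simp [MblkR, Matrix.fromBlocks, Pi.add_apply, Pi.smul_apply, smul_eq_mul]

lemma skewR {A : Matrix (Fin 4) (Fin 4) ℝ} (hA : A.transpose * etaR + etaR * A = 0)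
    (u v : Fin 4 → ℝ) : innR (A.mulVec u) v = - innR u (A.mulVec v) := by
  have h1 : innR (A.mulVec u) v = dotProduct u ((A.transpose * etaR).mulVec v) := by
    rw [innR, ← Matrix.mulVec_mulVec,
      Matrix.dotProduct_mulVec u A.transpose (etaR.mulVec v), Matrix.vecMul_transpose]
  have h2 : innR u (A.mulVec v) = dotProduct u ((etaR * A).mulVec v) := by
    rw [innR, ← Matrix.mulVec_mulVec]
  have h3 := congrArg (fun M => dotProduct u (Matrix.mulVec M v)) hA
  simp only [Matrix.add_mulVec, dotProduct_add, Matrix.zero_mulVec,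
    dotProduct_zero] at h3
  linarith

lemma bracketR (A : Matrix (Fin 4) (Fin 4) ℝ) (b c : Fin 4 → ℝ) :
    ⁅MblkR A b, MblkR 0 c⁆ = MblkR 0 (A.mulVec c) := by
  rw [Ring.lie_def]
  ext i j
  rcases i with i | i <;> rcases j with j | j <;>
    simp [MblkR, Matrix.fromBlocks_multiply, Matrix.mul_apply, Matrix.mulVec,
      dotProduct]

lemma lblock_mu (u v w : Fin 4 → ℝ) : lorentzBlockR (muP u v w) = 0 := by
  ext i j
  simp [lorentzBlockR, muP, MblkR, Matrix.fromBlocks]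

/-- `μ(u,v,w) = ⟨u,v⟩_η τ(w) + ⟨v,w⟩_η τ(u) + ⟨w,u⟩_η τ(v)` is a totally symmetric
trilinear map from `g₁ = ℝ⁴` (the vector representation, with `M(A,b)·v = Av`) to
`p(1,3)` (indeed into the translations), satisfying the equivariance identity J3 and the
identity J4; hence `p(1,3) ⊕ ℝ⁴` is an elementary Lie algebra of order 3. -/
theorem poincare_order3 :
    -- μ is totally symmetric …
    (∀ u v w : Fin 4 → ℝ, muP u v w = muP v u w) ∧
    (∀ u v w : Fin 4 → ℝ, muP u v w = muP u w v) ∧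
    -- … and trilinear
    (∀ (a : ℝ) (u u' v w : Fin 4 → ℝ),
      muP (a • u + u') v w = a • muP u v w + muP u' v w) ∧
    -- μ takes values among the translations, in particular in p(1,3)
    (∀ u v w : Fin 4 → ℝ, ∃ b : Fin 4 → ℝ, muP u v w = MblkR 0 b) ∧
    -- J3 : equivariance under the action of p(1,3)
    (∀ (A : Matrix (Fin 4) (Fin 4) ℝ) (b : Fin 4 → ℝ),
      A.transpose * etaR + etaR * A = 0 →
      ∀ u v w : Fin 4 → ℝ,
        ⁅MblkR A b, muP u v w⁆ =
          muP (A.mulVec u) v w + muP u (A.mulVec v) w + muP u v (A.mulVec w)) ∧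
    -- J4 : the sum of the actions of the values of μ on g₁ vanishes
    (∀ y₁ y₂ y₃ y₄ : Fin 4 → ℝ,
      (lorentzBlockR (muP y₂ y₃ y₄)).mulVec y₁ +
      (lorentzBlockR (muP y₁ y₃ y₄)).mulVec y₂ +
      (lorentzBlockR (muP y₁ y₂ y₄)).mulVec y₃ +
      (lorentzBlockR (muP y₁ y₂ y₃)).mulVec y₄ = 0) := by
  refine ⟨?_, ?_, ?_, ?_, ?_, ?_⟩
  · intro u v w
    simp only [muP]
    rw [innR_symm v u, innR_symm u w, innR_symm w v]
    abel
  · intro u v w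
    simp only [muP]
    rw [innR_symm u w, innR_symm w v, innR_symm v u]
    abel
  · intro a u u' v w
    simp only [muP, innR_left, innR_right, tau_lin]
    module
  · intro u v w
    refine ⟨innR u v • w + innR v w • u + innR w u • v, ?_⟩
    ext i j
    rcases i with i | i <;> rcases j with j | j <;>
      simp [muP, MblkR, Matrix.fromBlocks, smul_eq_mul]
  · intro A b hA u v w
    have key : ∀ c : Fin 4 → ℝ, MblkR A b * MblkR 0 c - MblkR 0 c * MblkR A b = MblkR 0 (A.mulVec c) :=
      fun c => by rw [← Ring.lie_def]; exact bracketR A b c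
    simp only [muP, Ring.lie_def, mul_add, add_mul, mul_smul_comm, smul_mul_assoc]
    rw [← key u, ← key v, ← key w]
    rw [skewR hA u v, skewR hA v w, skewR hA w u]
    module
  · intro y₁ y₂ y₃ y₄
    simp [lblock_mu, Matrix.zero_mulVec]
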